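/- A symmetrically totally monotone function f on (0,T) is completely monotone on (0,T/2) (i.e., (-1)^n f^{(n)}(x) ≥ 0 for all x ∈ (0,T/2) and all n ≥ 0) and absolutely monotone on (T/2,T) (i.e., f^{(n)}(x) ≥ 0 for all x ∈ (T/2,T) and all n ≥ 0). -/

import Mathlib

open FormalMultilinearSeries
open scoped ENNReal NNReal

/-- Nonnegativity of the diagonal values of `changeOrigin` for a scalar series with
nonnegative coefficients, at a nonnegative shift. -/
lemma changeOrigin_ofScalars_nonneg (b : ℕ → ℝ) (hb : ∀ k, 0 ≤ b k) {y : ℝ} (hy : 0 ≤ y)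
    (n : ℕ) : 0 ≤ ((ofScalars ℝ b).changeOrigin y n) (fun _ => (1 : ℝ)) := by
  set p := ofScalars ℝ b with hp
  have key : ∀ l : ℕ, 0 ≤ (p.changeOriginSeries n l fun _ => y) (fun _ => (1 : ℝ)) := by
    intro l
    rw [changeOriginSeries, ContinuousMultilinearMap.sum_apply,
      ContinuousMultilinearMap.sum_apply]
    apply Finset.sum_nonneg
    intro s _
    rw [changeOriginSeriesTerm_apply]
    have hval : p (n + l) (s.1.piecewise (fun _ => y) fun _ => (1 : ℝ)) =
        b (n + l) * (List.ofFn (s.1.piecewise (fun _ => y) fun _ => (1 : ℝ))).prod := by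
      simp [hp, ofScalars]
    rw [hval, List.prod_ofFn]
    refine mul_nonneg (hb _) (Finset.prod_nonneg fun i _ => ?_)
    by_cases h : i ∈ s.1 <;> simp [Finset.piecewise, h, hy]
  have hco : p.changeOrigin y n = (p.changeOriginSeries n).sum y := rfl
  rw [hco, FormalMultilinearSeries.sum]
  by_cases hs : Summable fun l => p.changeOriginSeries n l fun _ => y
  · have hmt := (ContinuousMultilinearMap.apply ℝ (fun _ : Fin n => ℝ) ℝ
      (fun _ => (1 : ℝ))).map_tsum hs
    simp only [ContinuousMultilinearMap.apply_apply] at hmt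
    rw [hmt]
    exact tsum_nonneg key
  · rw [tsum_eq_zero_of_not_summable hs]
    simp

/-- A function `f : (0,T) → ℝ` is symmetrically totally monotone if it is analytic on `(0,T)`
and its power series development around `T/2` has the form `∑ a_{2n} (x - T/2)^(2n)` with
nonnegative coefficients. -/
def SymmTotallyMonotone (T : ℝ) (f : ℝ → ℝ) : Prop :=
  AnalyticOnNhd ℝ f (Set.Ioo 0 T) ∧
    ∃ a : ℕ → ℝ, (∀ n, 0 ≤ a n) ∧
      ∀ x ∈ Set.Ioo 0 T, HasSum (fun n => a n * (x - T / 2) ^ (2 * n)) (f x)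

/-- A symmetrically totally monotone function on `(0,T)` is completely monotone
on `(0,T/2)` and absolutely monotone on `(T/2,T)`. -/
theorem stmt2 (T : ℝ) (hT : 0 < T) (f : ℝ → ℝ) (hf : SymmTotallyMonotone T f) :
    (∀ n : ℕ, ∀ x ∈ Set.Ioo 0 (T / 2), 0 ≤ (-1 : ℝ) ^ n * iteratedDeriv n f x) ∧
      (∀ n : ℕ, ∀ x ∈ Set.Ioo (T / 2) T, 0 ≤ iteratedDeriv n f x) := by
  obtain ⟨-, a, ha, hsum⟩ := hf
  have hT2 : 0 < T / 2 := by linarith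
  set b : ℕ → ℝ := fun k => if Even k then a (k / 2) else 0 with hbdef
  have hb : ∀ k, 0 ≤ b k := by
    intro k
    by_cases h : Even k <;> simp [hbdef, h, ha _]
  set p := ofScalars ℝ b with hp
  have hinj : Function.Injective (fun m : ℕ => 2 * m) := mul_right_injective₀ two_ne_zero
  have hzero : ∀ (z : ℝ) (k : ℕ), k ∉ Set.range (fun m : ℕ => 2 * m) → b k * z ^ k = 0 := by
    intro z k hk
    have hne : ¬ Even k := by
      simp only [Set.mem_range] at hk
      rw [even_iff_exists_two_mul]
      exact fun ⟨m, hm⟩ => hk ⟨m, hm.symm⟩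
    simp [hbdef, hne]
  have hcomp : ∀ z : ℝ, ((fun k => b k * z ^ k) ∘ fun m : ℕ => 2 * m) =
      fun m => a m * z ^ (2 * m) := by
    intro z
    funext m
    simp [hbdef, Function.comp]
  -- HasSum of the full series at points of the ball
  have hhs : ∀ z : ℝ, |z| < T / 2 → HasSum (fun k => b k * z ^ k) (f (T / 2 + z)) := by
    intro z hz
    rw [abs_lt] at hz
    have hmem : T / 2 + z ∈ Set.Ioo 0 T := ⟨by linarith [hz.1], by linarith [hz.2]⟩
    have h1 := hsum _ hmem
    rw [show (T / 2 + z - T / 2) = z by ring] at h1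
    have hiff := Function.Injective.hasSum_iff (f := fun k => b k * z ^ k)
      (a := f (T / 2 + z)) hinj (fun k hk => hzero z k hk)
    rw [hcomp z] at hiff
    exact hiff.mp h1
  -- the power series on the ball
  have hps : HasFPowerSeriesOnBall f p (T / 2) (ENNReal.ofReal (T / 2)) := by
    constructor
    · apply ENNReal.le_of_forall_nnreal_lt
      intro r hr
      have hrR : (r : ℝ) < T / 2 := by
        rw [← ENNReal.ofReal_coe_nnreal, ENNReal.ofReal_lt_ofReal_iff hT2] at hr
        exact hr
      apply p.le_radius_of_summable
      have hs := (hhs r (by rw [abs_of_nonneg r.coe_nonneg]; exact hrR)).summable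
      apply hs.congr
      intro k
      rw [hp, ofScalars_norm, Real.norm_eq_abs, abs_of_nonneg (hb k)]
    · exact ENNReal.ofReal_pos.2 hT2
    · intro y hy
      rw [mem_emetric_ball_zero_iff, ← ofReal_norm,
        ENNReal.ofReal_lt_ofReal_iff hT2, Real.norm_eq_abs] at hy
      have hterm : (fun n => p n fun _ => y) = fun n => b n * y ^ n := by
        funext n
        rw [hp, ofScalars_apply_eq, smul_eq_mul]
      rw [hterm]
      exact hhs y hy
  -- absolute monotonicity on the right half
  have part2 : ∀ n : ℕ, ∀ x ∈ Set.Ioo (T / 2) T, 0 ≤ iteratedDeriv n f x := by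
    intro n x hx
    set y := x - T / 2 with hydef
    have hy0 : 0 ≤ y := by rw [hydef]; linarith [hx.1]
    have hylt : |y| < T / 2 := by
      rw [abs_of_nonneg hy0, hydef]; linarith [hx.2]
    have hyball : (‖y‖₊ : ℝ≥0∞) < ENNReal.ofReal (T / 2) := by
      rw [← enorm_eq_nnnorm, ← ofReal_norm, ENNReal.ofReal_lt_ofReal_iff hT2,
        Real.norm_eq_abs]
      exact hylt
    have hco := hps.changeOrigin hyball
    rw [show T / 2 + y = x by rw [hydef]; ring] at hco
    have hfact := hco.factorial_smul (1 : ℝ) n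
    rw [iteratedDeriv_eq_iteratedFDeriv, ← hfact]
    exact nsmul_nonneg (changeOrigin_ofScalars_nonneg b hb hy0 n) _
  refine ⟨?_, part2⟩
  -- complete monotonicity on the left half, by symmetry
  intro n x hx
  have hx' : x ∈ Set.Ioo 0 T := ⟨hx.1, by linarith [hx.2]⟩
  have hsym : ∀ z ∈ Set.Ioo 0 T, f z = f (T - z) := by
    intro z hz
    have hz' : T - z ∈ Set.Ioo 0 T := ⟨by linarith [hz.2], by linarith [hz.1]⟩
    have h1 := hsum z hz
    have h2 := hsum _ hz'
    have he : (fun m => a m * (T - z - T / 2) ^ (2 * m)) =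
        fun m => a m * (z - T / 2) ^ (2 * m) := by
      funext m
      rw [show T - z - T / 2 = -(z - T / 2) by ring, Even.neg_pow (even_two_mul m)]
    rw [he] at h2
    exact h1.unique h2
  have heq : iteratedDeriv n f x = iteratedDeriv n (fun z => f (T - z)) x := by
    apply Filter.EventuallyEq.iteratedDeriv_eq
    filter_upwards [isOpen_Ioo.mem_nhds hx'] with z hz
    exact hsym z hz
  have hcn : iteratedDeriv n (fun z => f (T - z)) x
      = (-1 : ℝ) ^ n • iteratedDeriv n (fun w => f (T + w)) (-x) := by
    have h := iteratedDeriv_comp_neg n (fun w => f (T + w)) x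
    simpa [sub_eq_add_neg] using h
  have hsh : iteratedDeriv n (fun w => f (T + w)) (-x) = iteratedDeriv n f (T - x) := by
    rw [iteratedDeriv_comp_const_add n f T]
    norm_num [sub_eq_add_neg]
  have hTx : T - x ∈ Set.Ioo (T / 2) T := ⟨by linarith [hx.2], by linarith [hx.1]⟩
  have hD := part2 n (T - x) hTx
  rw [heq, hcn, hsh, smul_eq_mul, ← mul_assoc, ← pow_add]
  have hone : (-1 : ℝ) ^ (n + n) = 1 := by
    rw [← two_mul, pow_mul]; norm_num
  rw [hone, one_mul]
  exact hD
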